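/- Let $\theta\in H^1(Y^*)$ be $L$-periodic in $y$ with trace $\theta\in L^2(\partial Y^*)$, extended periodically to the band $Y$, and let $w_0^{(3)}\in L^\infty(0,1)$. Define $H^\epsilon(x_1,x_2) = -\theta(x_1/\epsilon,x_2/\epsilon)\,w_0^{(3)}(x_1)$ on $\partial R^\epsilon$. Then, assuming $1/(\epsilon L)\in\mathbb{N}$, $\|H^\epsilon N_1^\epsilon\|_{L^2(\partial R^\epsilon)}^2 \le \frac{K_1}{L}\|\theta\|_{L^2(\partial Y^*)}^2$ with $K_1 = \|(1+(g')^2)^{1/2}\|_{L^\infty(0,L)}\|w_0^{(3)}\|_{L^\infty(0,1)}^2$ independent of $\epsilon$; the integral over the lateral boundary of $R^\epsilon$ contributes a bounded amount by periodicity of $\theta$. -/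

import Mathlib

open MeasureTheory Set Real

lemma periodic_nsmul_intervalIntegral {f : ℝ → ℝ} {T : ℝ}
    (hf : Function.Periodic f T) (hint : IntervalIntegrable f volume 0 T) (n : ℕ) :
    IntervalIntegrable f volume 0 (n * T) ∧
      (∫ x in (0:ℝ)..(n * T), f x) = n * ∫ x in (0:ℝ)..T, f x := by
  induction n with
  | zero => simp
  | succ k ih =>
    have htrans : IntervalIntegrable f volume ((k:ℝ) * T) ((k:ℝ) * T + T) := by
      have h1 := hint.comp_sub_right ((k:ℝ) * T)
      have h2 : (fun x => f (x - (k:ℝ) * T)) = f := by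
        funext x; exact hf.sub_nat_mul_eq k
      rw [h2] at h1
      simpa [add_comm] using h1
    have hend : ((k + 1 : ℕ) : ℝ) * T = (k:ℝ) * T + T := by push_cast; ring
    have hadd := intervalIntegral.integral_add_adjacent_intervals ih.1 htrans
    have hper : (∫ x in ((k:ℝ) * T)..((k:ℝ) * T + T), f x) = ∫ x in (0:ℝ)..T, f x := by
      simpa using hf.intervalIntegral_add_eq ((k:ℝ) * T) 0
    constructor
    · rw [hend]; exact ih.1.trans htrans
    · rw [hend, ← hadd, ih.2, hper]; push_cast; ring

set_option maxHeartbeats 1000000 in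
/-- Boundary estimate for `Hᵉ = -θ(·/ε) w₀'''`:
`‖Hᵉ N₁ᵉ‖²_{L²(∂Rᵉ)} ≤ (K₁/L) ‖θ‖²_{L²(∂Y*)}` with
`K₁ = ‖(1+g'²)^{1/2}‖_∞ ‖w₀'''‖²_∞` independent of `ε`; the boundary of `Rᵉ`
consists of the oscillatory top (with surface element `√(1+g'(x/ε)²) dx` and
`N₁ = g'/√(1+g'²)`), the bottom (where `N₁ = 0`), and the lateral parts
(where `N₁² = 1`), whose contribution is controlled by periodicity of `θ`. -/
theorem boundary_estimate_H (L ε : ℝ) (hL : 0 < L) (hε : 0 < ε)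
    (g : ℝ → ℝ) (hg : ContDiff ℝ 1 g) (hgper : Function.Periodic g L)
    (hgpos : ∀ y, 0 < g y)
    (θ : ℝ × ℝ → ℝ) (hθm : Measurable θ)
    (hθper : ∀ y z : ℝ, θ (y + L, z) = θ (y, z))
    (w3 : ℝ → ℝ) (M3 Ksq : ℝ)
    (hM3 : ∀ x ∈ Icc (0:ℝ) 1, |w3 x| ≤ M3)
    (hKsq : ∀ y : ℝ, Real.sqrt (1 + (deriv g y) ^ 2) ≤ Ksq)
    (n : ℕ) (hn : 0 < n) (hcell : ε * L * n = 1)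
    -- trace of θ is square integrable on ∂Y*
    (htop : IntegrableOn (fun y => (θ (y, g y)) ^ 2 * Real.sqrt (1 + (deriv g y) ^ 2)) (Ioo 0 L))
    (hbot : IntegrableOn (fun y => (θ (y, 0)) ^ 2) (Ioo 0 L))
    (hlat : IntegrableOn (fun z => (θ (0, z)) ^ 2) (Ioo 0 (g 0))) :
    -- ‖Hᵉ N₁ᵉ‖² over the oscillatory, fixed and lateral parts of ∂Rᵉ
    ((∫ x in Ioo (0:ℝ) 1,
        (θ (x / ε, g (x / ε)) * w3 x *
          (deriv g (x / ε) / Real.sqrt (1 + (deriv g (x / ε)) ^ 2))) ^ 2 *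
          Real.sqrt (1 + (deriv g (x / ε)) ^ 2)) +
      (∫ x in Ioo (0:ℝ) 1, (θ (x / ε, 0) * w3 x * 0) ^ 2) +
      (∫ t in Ioo 0 (ε * g 0), (θ (0, t / ε) * w3 0) ^ 2) +
      (∫ t in Ioo 0 (ε * g (1 / ε)), (θ (1 / ε, t / ε) * w3 1) ^ 2)) ≤
    (Ksq * M3 ^ 2 / L) *
      ((∫ y in Ioo 0 L, (θ (y, g y)) ^ 2 * Real.sqrt (1 + (deriv g y) ^ 2)) +
       (∫ y in Ioo 0 L, (θ (y, 0)) ^ 2) +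
       (∫ z in Ioo 0 (g 0), (θ (0, z)) ^ 2) +
       (∫ z in Ioo 0 (g L), (θ (L, z)) ^ 2)) := by
  -- basic facts
  have hε0 : ε ≠ 0 := ne_of_gt hε
  have hinvε : 1 / ε = (n : ℝ) * L := by
    field_simp
    linear_combination -hcell
  have hεn : ε * (n : ℝ) = 1 / L := by
    field_simp
    linear_combination hcell
  have hs : ∀ y : ℝ, 0 < Real.sqrt (1 + (deriv g y) ^ 2) :=
    fun y => Real.sqrt_pos.mpr (by positivity)
  have hs2 : ∀ y : ℝ, (Real.sqrt (1 + (deriv g y) ^ 2)) ^ 2 = 1 + (deriv g y) ^ 2 :=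
    fun y => Real.sq_sqrt (by positivity)
  have hderper : ∀ y : ℝ, deriv g (y + L) = deriv g y := by
    intro y
    have h1 : (fun x => g (x + L)) = g := funext fun x => hgper x
    calc deriv g (y + L) = deriv (fun x => g (x + L)) y := (deriv_comp_add_const g L y).symm
      _ = deriv g y := by rw [h1]
  have θnat : ∀ (k : ℕ) (z : ℝ), θ ((k : ℝ) * L, z) = θ (0, z) := by
    intro k z
    induction k with
    | zero => simp
    | succ m ih =>
      have h1 : ((m + 1 : ℕ) : ℝ) * L = (m : ℝ) * L + L := by push_cast; ring
      rw [h1, hθper, ih]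
  set F : ℝ → ℝ := fun y => (θ (y, g y)) ^ 2 * Real.sqrt (1 + (deriv g y) ^ 2) with hF
  have hFper : Function.Periodic F L := by
    intro y
    simp only [hF, hgper y, hθper, hderper y]
  have hFint : IntervalIntegrable F volume 0 L :=
    (intervalIntegrable_iff_integrableOn_Ioo_of_le hL.le).mpr htop
  obtain ⟨hFn, hFeq⟩ := periodic_nsmul_intervalIntegral hFper hFint n
  -- integrability of F(·/ε) on (0,1)
  have hnL1 : (n : ℝ) * L * ε = 1 := by linear_combination hcell
  have hcompII : IntervalIntegrable (fun x => F (x / ε)) volume 0 1 := by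
    have h1 := hFn.comp_mul_right (c := ε⁻¹)
    have h2 : ((n : ℝ) * L) / ε⁻¹ = 1 := by
      rw [div_eq_mul_inv, inv_inv]; exact hnL1
    simp only [zero_div, h2, ← div_eq_mul_inv] at h1
    exact h1
  have hcompint : IntegrableOn (fun x => F (x / ε)) (Ioo 0 1) volume :=
    (intervalIntegrable_iff_integrableOn_Ioo_of_le (by norm_num)).mp hcompII
  -- value of the substituted integral
  have hSval : (∫ x in Ioo (0:ℝ) 1, F (x / ε)) = (1 / L) * ∫ y in Ioo 0 L, F y := by
    have e1 : (∫ x in Ioo (0:ℝ) 1, F (x / ε)) = ∫ x in (0:ℝ)..1, F (x / ε) := by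
      rw [intervalIntegral.integral_of_le (by norm_num : (0:ℝ) ≤ 1),
        integral_Ioc_eq_integral_Ioo]
    have e2 : (∫ x in (0:ℝ)..1, F (x / ε)) = ε • ∫ y in (0/ε)..(1/ε), F y :=
      intervalIntegral.integral_comp_div F hε0
    have e3 : (∫ y in Ioo (0:ℝ) L, F y) = ∫ y in (0:ℝ)..L, F y := by
      rw [intervalIntegral.integral_of_le hL.le, integral_Ioc_eq_integral_Ioo]
    rw [e1, e2, e3, zero_div, hinvε, hFeq, smul_eq_mul]
    rw [← mul_assoc, hεn]
  -- bound on the oscillating-top term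
  have hT1 : (∫ x in Ioo (0:ℝ) 1,
      (θ (x / ε, g (x / ε)) * w3 x *
        (deriv g (x / ε) / Real.sqrt (1 + (deriv g (x / ε)) ^ 2))) ^ 2 *
        Real.sqrt (1 + (deriv g (x / ε)) ^ 2)) ≤
      M3 ^ 2 * ((1 / L) * ∫ y in Ioo 0 L, F y) := by
    have step : (∫ x in Ioo (0:ℝ) 1,
        (θ (x / ε, g (x / ε)) * w3 x *
          (deriv g (x / ε) / Real.sqrt (1 + (deriv g (x / ε)) ^ 2))) ^ 2 *
          Real.sqrt (1 + (deriv g (x / ε)) ^ 2)) ≤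
        ∫ x in Ioo (0:ℝ) 1, M3 ^ 2 * F (x / ε) := by
      apply integral_mono_of_nonneg
      · exact Filter.Eventually.of_forall fun x => by positivity
      · exact hcompint.const_mul _
      · rw [Filter.EventuallyLE, ae_restrict_iff' measurableSet_Ioo]
        refine Filter.Eventually.of_forall fun x hx => ?_
        set a := θ (x / ε, g (x / ε))
        set w := w3 x
        set d := deriv g (x / ε)
        set sv := Real.sqrt (1 + d ^ 2) with hsv
        have hs0 : 0 < sv := hs _
        have hs2' : sv ^ 2 = 1 + d ^ 2 := hs2 _
        have hw : w ^ 2 ≤ M3 ^ 2 := by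
          have h := hM3 x ⟨hx.1.le, hx.2.le⟩
          nlinarith [abs_nonneg (w3 x), sq_abs (w3 x)]
        have key : (d / sv) ^ 2 * sv ≤ sv := by
          rw [div_pow, hs2', div_mul_eq_mul_div, div_le_iff₀ (by positivity)]
          nlinarith [hs0.le]
        have h2 : (a * w) ^ 2 * sv ≤ M3 ^ 2 * (a ^ 2 * sv) := by
          nlinarith [sq_nonneg a, hs0.le, mul_nonneg (sq_nonneg a) hs0.le]
        calc (a * w * (d / sv)) ^ 2 * sv = (a * w) ^ 2 * ((d / sv) ^ 2 * sv) := by ring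
          _ ≤ (a * w) ^ 2 * sv := by nlinarith [sq_nonneg (a * w)]
          _ ≤ M3 ^ 2 * (a ^ 2 * sv) := h2
          _ = M3 ^ 2 * F (x / ε) := rfl
    calc _ ≤ ∫ x in Ioo (0:ℝ) 1, M3 ^ 2 * F (x / ε) := step
      _ = M3 ^ 2 * ∫ x in Ioo (0:ℝ) 1, F (x / ε) := by rw [integral_const_mul]
      _ = M3 ^ 2 * ((1 / L) * ∫ y in Ioo 0 L, F y) := by rw [hSval]
  -- the bottom term vanishes
  have hT2 : (∫ x in Ioo (0:ℝ) 1, (θ (x / ε, 0) * w3 x * 0) ^ 2) = 0 := by simp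
  -- bound on the lateral terms
  have lat_bound : ∀ c : ℝ, |c| ≤ M3 →
      (∫ t in Ioo 0 (ε * g 0), (θ (0, t / ε) * c) ^ 2) ≤
        ε * (M3 ^ 2 * ∫ z in Ioo 0 (g 0), (θ (0, z)) ^ 2) := by
    intro c hc
    have hg0 := hgpos 0
    have hc2 : c ^ 2 ≤ M3 ^ 2 := by
      nlinarith [abs_nonneg c, sq_abs c]
    have e1 : (∫ t in Ioo 0 (ε * g 0), (θ (0, t / ε) * c) ^ 2) =
        ∫ t in (0:ℝ)..(ε * g 0), (θ (0, t / ε) * c) ^ 2 := by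
      rw [intervalIntegral.integral_of_le (by positivity), integral_Ioc_eq_integral_Ioo]
    have e2 : (∫ t in (0:ℝ)..(ε * g 0), (θ (0, t / ε) * c) ^ 2) =
        ε • ∫ z in (0/ε)..(ε * g 0 / ε), (θ (0, z) * c) ^ 2 :=
      intervalIntegral.integral_comp_div (fun z => (θ (0, z) * c) ^ 2) hε0
    have e3 : ε * g 0 / ε = g 0 := by field_simp
    have e4 : (∫ z in (0:ℝ)..(g 0), (θ (0, z) * c) ^ 2) =
        ∫ z in Ioo (0:ℝ) (g 0), (θ (0, z) * c) ^ 2 := by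
      rw [intervalIntegral.integral_of_le hg0.le, integral_Ioc_eq_integral_Ioo]
    have e5 : (∫ z in Ioo (0:ℝ) (g 0), (θ (0, z) * c) ^ 2) ≤
        M3 ^ 2 * ∫ z in Ioo 0 (g 0), (θ (0, z)) ^ 2 := by
      rw [← integral_const_mul]
      apply integral_mono_of_nonneg
      · exact Filter.Eventually.of_forall fun z => by positivity
      · exact hlat.const_mul _
      · refine Filter.Eventually.of_forall fun z => ?_
        show (θ (0, z) * c) ^ 2 ≤ M3 ^ 2 * (θ (0, z)) ^ 2
        nlinarith [mul_le_mul_of_nonneg_left hc2 (sq_nonneg (θ (0, z)))]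
    rw [e1, e2, zero_div, e3, smul_eq_mul, e4]
    exact mul_le_mul_of_nonneg_left e5 hε.le
  have hM30 : 0 ≤ M3 := (abs_nonneg _).trans (hM3 0 ⟨le_refl _, by norm_num⟩)
  have hT3 : (∫ t in Ioo 0 (ε * g 0), (θ (0, t / ε) * w3 0) ^ 2) ≤
      ε * (M3 ^ 2 * ∫ z in Ioo 0 (g 0), (θ (0, z)) ^ 2) :=
    lat_bound (w3 0) (hM3 0 ⟨le_refl _, by norm_num⟩)
  -- rewrite the second lateral term using periodicity
  have hg1ε : g (1 / ε) = g 0 := by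
    rw [hinvε]
    simpa using (hgper.nat_mul n) 0
  have hθ1ε : ∀ z : ℝ, θ (1 / ε, z) = θ (0, z) := by
    intro z; rw [hinvε]; exact θnat n z
  have hT4 : (∫ t in Ioo 0 (ε * g (1 / ε)), (θ (1 / ε, t / ε) * w3 1) ^ 2) ≤
      ε * (M3 ^ 2 * ∫ z in Ioo 0 (g 0), (θ (0, z)) ^ 2) := by
    have e : (∫ t in Ioo 0 (ε * g (1 / ε)), (θ (1 / ε, t / ε) * w3 1) ^ 2) =
        ∫ t in Ioo 0 (ε * g 0), (θ (0, t / ε) * w3 1) ^ 2 := by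
      rw [hg1ε]
      refine setIntegral_congr_fun measurableSet_Ioo fun t _ => ?_
      rw [hθ1ε]
    rw [e]
    exact lat_bound (w3 1) (hM3 1 ⟨by norm_num, le_refl _⟩)
  -- rewrite the last term of the right-hand side
  have hgL : g L = g 0 := by simpa using hgper 0
  have hD : (∫ z in Ioo 0 (g L), (θ (L, z)) ^ 2) = ∫ z in Ioo 0 (g 0), (θ (0, z)) ^ 2 := by
    rw [hgL]
    refine setIntegral_congr_fun measurableSet_Ioo fun z _ => ?_
    rw [show θ (L, z) = θ (0, z) from by simpa using hθper 0 z]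
  -- nonnegativity and size facts
  set A := ∫ y in Ioo (0:ℝ) L, F y with hA
  set B := ∫ y in Ioo (0:ℝ) L, (θ (y, 0)) ^ 2 with hB
  set C := ∫ z in Ioo (0:ℝ) (g 0), (θ (0, z)) ^ 2 with hC
  have hA0 : 0 ≤ A := setIntegral_nonneg measurableSet_Ioo fun y _ => by positivity
  have hB0 : 0 ≤ B := setIntegral_nonneg measurableSet_Ioo fun y _ => by positivity
  have hC0 : 0 ≤ C := setIntegral_nonneg measurableSet_Ioo fun z _ => by positivity
  have hK1 : 1 ≤ Ksq := by
    have h1 := hKsq 0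
    have h2 : (1:ℝ) ≤ Real.sqrt (1 + (deriv g 0) ^ 2) := by
      have h3 : Real.sqrt 1 ≤ Real.sqrt (1 + (deriv g 0) ^ 2) :=
        Real.sqrt_le_sqrt (by nlinarith [sq_nonneg (deriv g 0)])
      simpa using h3
    linarith
  have hεK : ε ≤ Ksq / L := by
    rw [le_div_iff₀ hL]
    have hn1 : (1:ℝ) ≤ (n:ℝ) := by exact_mod_cast hn
    nlinarith [mul_pos hε hL, mul_nonneg (sub_nonneg.mpr hn1) (mul_pos hε hL).le, hcell, hK1]
  -- assemble
  rw [hT2, hD]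
  have goalRHS : Ksq * M3 ^ 2 / L * (A + B + C + C) =
      (Ksq * M3 ^ 2 / L) * A + (Ksq * M3 ^ 2 / L) * B + (Ksq * M3 ^ 2 / L) * C +
        (Ksq * M3 ^ 2 / L) * C := by ring
  have hKsq0 : 0 ≤ Ksq := le_trans zero_le_one hK1
  have b1 : M3 ^ 2 * ((1 / L) * A) ≤ (Ksq * M3 ^ 2 / L) * A := by
    have h : M3 ^ 2 * (1 / L) ≤ Ksq * M3 ^ 2 / L := by
      rw [mul_one_div, div_le_div_iff_of_pos_right hL]
      nlinarith [sq_nonneg M3]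
    calc M3 ^ 2 * ((1 / L) * A) = (M3 ^ 2 * (1 / L)) * A := by ring
      _ ≤ (Ksq * M3 ^ 2 / L) * A := mul_le_mul_of_nonneg_right h hA0
  have b3 : ε * (M3 ^ 2 * C) ≤ (Ksq * M3 ^ 2 / L) * C := by
    have h : ε * M3 ^ 2 ≤ Ksq * M3 ^ 2 / L := by
      calc ε * M3 ^ 2 ≤ (Ksq / L) * M3 ^ 2 := mul_le_mul_of_nonneg_right hεK (sq_nonneg M3)
        _ = Ksq * M3 ^ 2 / L := by ring
    calc ε * (M3 ^ 2 * C) = (ε * M3 ^ 2) * C := by ring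
      _ ≤ (Ksq * M3 ^ 2 / L) * C := mul_le_mul_of_nonneg_right h hC0
  have b2 : 0 ≤ (Ksq * M3 ^ 2 / L) * B :=
    mul_nonneg (div_nonneg (mul_nonneg hKsq0 (sq_nonneg M3)) hL.le) hB0
  rw [goalRHS]
  linarith [hT1, hT3, hT4, b1, b2, b3]
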